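/- Let g be a convex distortion function and α ∈ [0,1). Then the unit disk U = { x ∈ ℝⁿ : ⟨⟨x⟩⟩_α^{S,g} ≤ 1 } of the scaled generalized-ES norm is a convex subset of ℝⁿ. -/

import Mathlib

open Finset

/-- The absolute values of the components of `x`, arranged in increasing order:
`absSorted x i` is `|x|_(i+1)` in the paper's notation. -/
noncomputable def absSorted {n : ℕ} (x : Fin n → ℝ) : Fin n → ℝ :=
  fun i => |x (Tuple.sort (fun j => |x j|) i)|

/-- `coeff n g i = g((i+1)/n) - g(i/n)`, the paper's `c_{i+1}`. -/
noncomputable def coeff (n : ℕ) (g : ℝ → ℝ) (i : Fin n) : ℝ :=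
  g (((i : ℕ) + 1 : ℝ) / n) - g (((i : ℕ) : ℝ) / n)

/-- The objective function whose infimum over `t` defines the scaled generalized-ES norm. -/
noncomputable def sgesObj {n : ℕ} (g : ℝ → ℝ) (α : ℝ) (x : Fin n → ℝ) (t : ℝ) : ℝ :=
  t + (1 - α)⁻¹ * ∑ i, coeff n g i * max (absSorted x i - t) 0

/-- The scaled generalized-ES norm `⟨⟨x⟩⟩_α^{S,g}`. -/
noncomputable def sges {n : ℕ} (g : ℝ → ℝ) (α : ℝ) (x : Fin n → ℝ) : ℝ :=
  ⨅ t : ℝ, sgesObj g α x t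

/-- The non-scaled generalized-ES norm `⟨⟨x⟩⟩_α^{g} = n(1-α)⟨⟨x⟩⟩_α^{S,g}`. -/
noncomputable def nges {n : ℕ} (g : ℝ → ℝ) (α : ℝ) (x : Fin n → ℝ) : ℝ :=
  (n : ℝ) * (1 - α) * sges g α x

/-- The dual norm of a (norm) functional `N` on `ℝⁿ`. -/
noncomputable def dualNorm {n : ℕ} (N : (Fin n → ℝ) → ℝ) (y : Fin n → ℝ) : ℝ :=
  sSup {r : ℝ | ∃ x : Fin n → ℝ, N x ≤ 1 ∧ r = ∑ i, x i * y i}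

/-- The ordered weighted L1 (OWL) norm. -/
noncomputable def owl {n : ℕ} (w : Fin n → ℝ) (x : Fin n → ℝ) : ℝ :=
  ∑ i, w i * absSorted x i

section Aux

variable {n : ℕ} {g : ℝ → ℝ}

lemma mem_Icc_div (hn : 1 ≤ n) {i : ℕ} (hi : i ≤ n) : ((i : ℝ) / n) ∈ Set.Icc (0:ℝ) 1 := by
  have hn0 : (0:ℝ) < n := by exact_mod_cast Nat.pos_of_ne_zero (by omega)
  refine ⟨by positivity, ?_⟩
  rw [div_le_one hn0]; exact_mod_cast hi

lemma coeff_nonneg (hn : 1 ≤ n) (hg_mono : MonotoneOn g (Set.Icc 0 1)) (i : Fin n) :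
    0 ≤ coeff n g i := by
  have h1 : ((i : ℕ) : ℝ) / n ∈ Set.Icc (0:ℝ) 1 := mem_Icc_div hn (le_of_lt i.isLt)
  have h2 : (((i : ℕ) + 1 : ℕ) : ℝ) / n ∈ Set.Icc (0:ℝ) 1 := mem_Icc_div hn i.isLt
  push_cast at h2
  have hn0 : (0:ℝ) < n := by exact_mod_cast Nat.pos_of_ne_zero (by omega)
  have hle : ((i : ℕ) : ℝ) / n ≤ ((i : ℕ) + 1 : ℝ) / n := by
    apply (div_le_div_iff_of_pos_right hn0).mpr; linarith
  have := hg_mono h1 h2 hle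
  simpa [coeff] using this

lemma coeff_monotone (hn : 1 ≤ n) (hg_conv : ConvexOn ℝ (Set.Icc 0 1) g) :
    Monotone (coeff n g) := by
  intro i j hij
  rcases eq_or_lt_of_le hij with rfl | hij
  · exact le_rfl
  have hn0 : (0:ℝ) < n := by exact_mod_cast Nat.pos_of_ne_zero (by omega)
  set a : ℝ := (i : ℕ) / n with ha
  set b : ℝ := ((i : ℕ) + 1) / n with hb
  set c : ℝ := (j : ℕ) / n with hc
  set d : ℝ := ((j : ℕ) + 1) / n with hd
  have hiv : (i : ℕ) < (j : ℕ) := hij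
  have hma : a ∈ Set.Icc (0:ℝ) 1 := mem_Icc_div hn (le_of_lt i.isLt)
  have hmb : b ∈ Set.Icc (0:ℝ) 1 := by
    have := mem_Icc_div hn (n := n) (i := (i:ℕ)+1) i.isLt; push_cast at this; exact this
  have hmc : c ∈ Set.Icc (0:ℝ) 1 := mem_Icc_div hn (le_of_lt j.isLt)
  have hmd : d ∈ Set.Icc (0:ℝ) 1 := by
    have := mem_Icc_div hn (n := n) (i := (j:ℕ)+1) j.isLt; push_cast at this; exact this
  have hab : a < b := by
    rw [ha, hb]; exact (div_lt_div_iff_of_pos_right hn0).mpr (by linarith)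
  have had : a < d := by
    rw [ha, hd]; exact (div_lt_div_iff_of_pos_right hn0).mpr (by exact_mod_cast by push_cast; linarith [hiv])
  have hcd : c < d := by
    rw [hc, hd]; exact (div_lt_div_iff_of_pos_right hn0).mpr (by linarith)
  have hac : a ≤ c := by
    rw [ha, hc]; exact (div_le_div_iff_of_pos_right hn0).mpr (by exact_mod_cast hiv.le)
  -- slope from a: (g b - g a)/(b - a) ≤ (g d - g a)/(d - a)
  have s1 := hg_conv.secant_mono hma hmb hmd hab.ne' had.ne' (by rw [hb, hd]; exact (div_le_div_iff_of_pos_right hn0).mpr (by exact_mod_cast by push_cast; linarith [hiv]) : b ≤ d)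
  -- slope to d: (g a - g d)/(a - d) ≤ (g c - g d)/(c - d)
  have s2 := hg_conv.secant_mono hmd hma hmc had.ne hcd.ne hac
  have e1 : (g d - g a)/(d - a) = (g a - g d)/(a - d) := by rw [← neg_div_neg_eq]; ring_nf
  have e2 : (g c - g d)/(c - d) = (g d - g c)/(d - c) := by rw [← neg_div_neg_eq]; ring_nf
  have key : (g b - g a)/(b - a) ≤ (g d - g c)/(d - c) := by
    calc (g b - g a)/(b - a) ≤ (g d - g a)/(d - a) := s1
    _ = (g a - g d)/(a - d) := e1
    _ ≤ (g c - g d)/(c - d) := s2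
    _ = (g d - g c)/(d - c) := e2
  have hba : b - a = 1 / n := by rw [ha, hb]; field_simp; ring
  have hdc : d - c = 1 / n := by rw [hc, hd]; field_simp; ring
  rw [hba, hdc, div_le_div_iff_of_pos_right (by positivity : (0:ℝ) < 1/n)] at key
  simpa [coeff, ha, hb, hc, hd] using key


lemma sum_coeff (hn : 1 ≤ n) (hg0 : g 0 = 0) (hg1 : g 1 = 1) :
    ∑ i, coeff n g i = 1 := by
  have hn0 : (0:ℝ) < n := by exact_mod_cast Nat.pos_of_ne_zero (by omega)
  have e0 : ∑ i : Fin n, coeff n g i = ∑ i ∈ Finset.range n,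
      (g (((i : ℝ) + 1) / n) - g ((i : ℝ) / n)) := by
    simp only [coeff]
    exact Fin.sum_univ_eq_sum_range (fun k => g (((k:ℝ)+1)/n) - g ((k:ℝ)/n)) n
  have e1 : ∑ i ∈ Finset.range n, (g (((i : ℝ) + 1) / n) - g ((i : ℝ) / n)) =
      ∑ i ∈ Finset.range n, (g ((((i+1 : ℕ)) : ℝ) / n) - g (((i : ℕ) : ℝ) / n)) := by
    refine Finset.sum_congr rfl fun i _ => ?_
    push_cast; ring_nf
  rw [e0, e1, Finset.sum_range_sub (fun k => g (((k : ℕ) : ℝ) / n))]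
  simp only [Nat.cast_zero, zero_div, hg0, sub_zero]
  rw [div_self hn0.ne', hg1]

lemma monotone_absSorted (x : Fin n → ℝ) : Monotone (absSorted x) :=
  Tuple.monotone_sort (fun j => |x j|)

/-- Rearrangement step: permuting the arguments can only decrease the weighted sum
with increasing weights. -/
lemma rearrange_le (hn : 1 ≤ n) (hg_mono : MonotoneOn g (Set.Icc 0 1))
    (hg_conv : ConvexOn ℝ (Set.Icc 0 1) g)
    (x : Fin n → ℝ) (t : ℝ) (π : Equiv.Perm (Fin n)) :
    ∑ i, coeff n g i * max (|x (π i)| - t) 0 ≤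
      ∑ i, coeff n g i * max (absSorted x i - t) 0 := by
  set σ := Tuple.sort (fun j => |x j|) with hσ
  set h : Fin n → ℝ := fun i => max (absSorted x i - t) 0 with hh
  have hhm : Monotone h := by
    intro i j hij
    exact max_le_max (by linarith [monotone_absSorted x hij]) le_rfl
  have hmono : Monovary (coeff n g) h := (coeff_monotone hn hg_conv).monovary hhm
  have hre := hmono.sum_smul_comp_perm_le_sum_smul (σ := σ⁻¹ * π)
  simp only [smul_eq_mul] at hre
  have eL : ∑ i, coeff n g i * max (|x (π i)| - t) 0 = ∑ i, coeff n g i * h ((σ⁻¹ * π) i) := by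
    refine Finset.sum_congr rfl fun i _ => ?_
    congr 1
    show max (|x (π i)| - t) 0 = max (absSorted x ((σ⁻¹ * π) i) - t) 0
    have : absSorted x ((σ⁻¹ * π) i) = |x (π i)| := by
      show |x (σ ((σ⁻¹ * π) i))| = |x (π i)|
      rw [Equiv.Perm.mul_apply, Equiv.Perm.inv_def, Equiv.apply_symm_apply]
    rw [this]
  rw [eL]
  exact hre

/-- Joint convexity of the weighted sum in `(x, t)`. -/
lemma sum_convex (hn : 1 ≤ n) (hg_mono : MonotoneOn g (Set.Icc 0 1))
    (hg_conv : ConvexOn ℝ (Set.Icc 0 1) g)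
    (x y : Fin n → ℝ) (s t a b : ℝ) (ha : 0 ≤ a) (hb : 0 ≤ b) (hab : a + b = 1) :
    ∑ i, coeff n g i * max (absSorted (a • x + b • y) i - (a * s + b * t)) 0 ≤
      a * ∑ i, coeff n g i * max (absSorted x i - s) 0 +
      b * ∑ i, coeff n g i * max (absSorted y i - t) 0 := by
  set z : Fin n → ℝ := a • x + b • y with hz
  set τ := Tuple.sort (fun j => |z j|) with hτ
  have step1 : ∀ i, coeff n g i * max (absSorted z i - (a * s + b * t)) 0 ≤
      coeff n g i * (a * max (|x (τ i)| - s) 0 + b * max (|y (τ i)| - t) 0) := by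
    intro i
    apply mul_le_mul_of_nonneg_left ?_ (coeff_nonneg hn hg_mono i)
    have habs : |z (τ i)| ≤ a * |x (τ i)| + b * |y (τ i)| := by
      calc |z (τ i)| = |a * x (τ i) + b * y (τ i)| := by simp [hz, Pi.add_apply]
      _ ≤ |a * x (τ i)| + |b * y (τ i)| := abs_add_le _ _
      _ = a * |x (τ i)| + b * |y (τ i)| := by
          rw [abs_mul, abs_mul, abs_of_nonneg ha, abs_of_nonneg hb]
    have h1 : |x (τ i)| - s ≤ max (|x (τ i)| - s) 0 := le_max_left _ _
    have h2 : |y (τ i)| - t ≤ max (|y (τ i)| - t) 0 := le_max_left _ _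
    have h3 : (0:ℝ) ≤ max (|x (τ i)| - s) 0 := le_max_right _ _
    have h4 : (0:ℝ) ≤ max (|y (τ i)| - t) 0 := le_max_right _ _
    have hA : absSorted z i = |z (τ i)| := rfl
    rw [hA]
    apply max_le
    · nlinarith [mul_le_mul_of_nonneg_left h1 ha, mul_le_mul_of_nonneg_left h2 hb]
    · nlinarith [mul_le_mul_of_nonneg_left h3 ha, mul_le_mul_of_nonneg_left h4 hb]
  calc ∑ i, coeff n g i * max (absSorted z i - (a * s + b * t)) 0
      ≤ ∑ i, coeff n g i * (a * max (|x (τ i)| - s) 0 + b * max (|y (τ i)| - t) 0) :=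
        Finset.sum_le_sum fun i _ => step1 i
    _ = a * ∑ i, coeff n g i * max (|x (τ i)| - s) 0 +
        b * ∑ i, coeff n g i * max (|y (τ i)| - t) 0 := by
        rw [Finset.mul_sum, Finset.mul_sum, ← Finset.sum_add_distrib]
        exact Finset.sum_congr rfl fun i _ => by ring
    _ ≤ a * ∑ i, coeff n g i * max (absSorted x i - s) 0 +
        b * ∑ i, coeff n g i * max (absSorted y i - t) 0 :=
        add_le_add
          (mul_le_mul_of_nonneg_left (rearrange_le hn hg_mono hg_conv x s τ) ha)
          (mul_le_mul_of_nonneg_left (rearrange_le hn hg_mono hg_conv y t τ) hb)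

/-- The objective is bounded below by the owl-type sum. -/
lemma sgesObj_lb (hn : 1 ≤ n) (hg_mono : MonotoneOn g (Set.Icc 0 1))
    (hg0 : g 0 = 0) (hg1 : g 1 = 1) {α : ℝ} (hα : α ∈ Set.Ico (0 : ℝ) 1)
    (x : Fin n → ℝ) (t : ℝ) :
    ∑ i, coeff n g i * absSorted x i ≤ sgesObj g α x t := by
  obtain ⟨hα0, hα1⟩ := hα
  have h1α : 0 < 1 - α := by linarith
  have hk1 : 1 ≤ (1 - α)⁻¹ := by
    rw [le_inv_comm₀ one_pos h1α]; simp; linarith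
  set T := ∑ i, coeff n g i * max (absSorted x i - t) 0 with hT
  set S := ∑ i, coeff n g i * absSorted x i with hS
  have hT0 : 0 ≤ T := Finset.sum_nonneg fun i _ =>
    mul_nonneg (coeff_nonneg hn hg_mono i) (le_max_right _ _)
  have hTS : S - t ≤ T := by
    have : ∑ i, coeff n g i * (absSorted x i - t) ≤ T :=
      Finset.sum_le_sum fun i _ =>
        mul_le_mul_of_nonneg_left (le_max_left _ _) (coeff_nonneg hn hg_mono i)
    calc S - t = ∑ i, coeff n g i * (absSorted x i - t) := by
          rw [hS]
          rw [show ∑ i, coeff n g i * (absSorted x i - t)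
              = ∑ i, coeff n g i * absSorted x i - (∑ i, coeff n g i) * t by
            rw [Finset.sum_mul, ← Finset.sum_sub_distrib]
            exact Finset.sum_congr rfl fun i _ => by ring]
          rw [sum_coeff hn hg0 hg1]; ring
      _ ≤ T := this
  show S ≤ t + (1 - α)⁻¹ * T
  nlinarith [mul_nonneg (by linarith : (0:ℝ) ≤ (1 - α)⁻¹ - 1) hT0]

lemma sges_bddBelow (hn : 1 ≤ n) (hg_mono : MonotoneOn g (Set.Icc 0 1))
    (hg0 : g 0 = 0) (hg1 : g 1 = 1) {α : ℝ} (hα : α ∈ Set.Ico (0 : ℝ) 1)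
    (x : Fin n → ℝ) : BddBelow (Set.range (sgesObj g α x)) := by
  exact ⟨_, fun r ⟨t, ht⟩ => ht ▸ sgesObj_lb hn hg_mono hg0 hg1 hα x t⟩

end Aux

/-- for a convex distortion function `g` and `α ∈ [0,1)`, the unit disk
of the scaled generalized-ES norm is a convex subset of `ℝⁿ`. -/
theorem stmt9 (n : ℕ) (hn : 1 ≤ n) (g : ℝ → ℝ)
    (hg_mono : MonotoneOn g (Set.Icc 0 1)) (hg_conv : ConvexOn ℝ (Set.Icc 0 1) g)
    (hg0 : g 0 = 0) (hg1 : g 1 = 1)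
    (α : ℝ) (hα : α ∈ Set.Ico (0 : ℝ) 1) :
    Convex ℝ {x : Fin n → ℝ | sges g α x ≤ 1} := by
  obtain ⟨hα0, hα1⟩ := hα
  have h1α : 0 < 1 - α := by linarith
  have hk0 : (0:ℝ) ≤ (1 - α)⁻¹ := by positivity
  intro x hx y hy a b ha hb hab
  simp only [Set.mem_setOf_eq] at hx hy ⊢
  have key : sges g α (a • x + b • y) ≤ a * sges g α x + b * sges g α y := by
    apply le_of_forall_pos_le_add
    intro ε hε
    obtain ⟨s, hs⟩ : ∃ s, sgesObj g α x s < sges g α x + ε :=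
      exists_lt_of_ciInf_lt (by linarith [lt_add_of_pos_right (sges g α x) hε] : sges g α x < sges g α x + ε)
    obtain ⟨t, ht⟩ : ∃ t, sgesObj g α y t < sges g α y + ε :=
      exists_lt_of_ciInf_lt (by linarith [lt_add_of_pos_right (sges g α y) hε] : sges g α y < sges g α y + ε)
    have h1 : sges g α (a • x + b • y) ≤ sgesObj g α (a • x + b • y) (a * s + b * t) :=
      ciInf_le (sges_bddBelow hn hg_mono hg0 hg1 ⟨hα0, hα1⟩ _) _
    have h2 : sgesObj g α (a • x + b • y) (a * s + b * t) ≤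
        a * sgesObj g α x s + b * sgesObj g α y t := by
      have := sum_convex hn hg_mono hg_conv x y s t a b ha hb hab
      have h3 := mul_le_mul_of_nonneg_left this hk0
      simp only [sgesObj]
      nlinarith [h3]
    calc sges g α (a • x + b • y) ≤ a * sgesObj g α x s + b * sgesObj g α y t :=
          h1.trans h2
      _ ≤ a * (sges g α x + ε) + b * (sges g α y + ε) :=
          add_le_add (mul_le_mul_of_nonneg_left hs.le ha)
            (mul_le_mul_of_nonneg_left ht.le hb)
      _ ≤ a * sges g α x + b * sges g α y + ε := by nlinarith [hab]
  have h4 : a * sges g α x + b * sges g α y ≤ a * 1 + b * 1 :=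
    add_le_add (mul_le_mul_of_nonneg_left hx ha) (mul_le_mul_of_nonneg_left hy hb)
  calc sges g α (a • x + b • y) ≤ a * sges g α x + b * sges g α y := key
    _ ≤ 1 := by rw [mul_one, mul_one, hab] at h4; exact h4
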